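/- There exists a non-measurable query: there is a Borel set B ⊆ ℝ × ℝ such that the map Q_B : Multiset ℝ → Multiset ℝ, defined by Q_B(D) = D if D is a singleton multiset {x} for some x ∈ ℝ with (x, y) ∈ B for some y ∈ ℝ, and Q_B(D) = the empty multiset otherwise, is not measurable with respect to the counting σ-algebra on Multiset ℝ (for the Borel σ-algebra on ℝ) on both domain and codomain. -/

import Mathlib

/- `countIn D E` is the number of elements of the finite multiset `D` lying in the set `E`,
counted with multiplicity. -/
open Classical in
noncomputable def countIn {X : Type*} (D : Multiset X) (E : Set X) : ℕ :=
  (D.filter (· ∈ E)).card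

/-- The counting σ-algebra on the space of finite multisets over a measurable space `X`:
generated by the counting events `C(E,n) = {D | countIn D E = n}` for `E` measurable, `n : ℕ`. -/
def countingMS (X : Type*) [MeasurableSpace X] : MeasurableSpace (Multiset X) :=
  MeasurableSpace.generateFrom
    {C : Set (Multiset X) |
      ∃ (E : Set X) (n : ℕ), MeasurableSet E ∧ C = {D : Multiset X | countIn D E = n}}

open MeasureTheory Set TopologicalSpace

private abbrev ZZ : Type := ℕ → ℕ

private lemma ZZ_not_countable : ¬ Countable ZZ := by
  intro h
  obtain ⟨f, hf⟩ := exists_surjective_nat ZZ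
  obtain ⟨m, hm⟩ := hf (fun n => f n n + 1)
  have := congrFun hm m
  omega

/-- There is a closed subset of `ZZ × ZZ` whose first-coordinate projection is not Borel. -/
private lemma exists_closed_nonmeasurable_proj :
    ∃ C : Set (ZZ × ZZ), IsClosed C ∧ ¬ MeasurableSet {x : ZZ | ∃ w : ZZ, (x, w) ∈ C} := by
  haveI : PolishSpace (ZZ × ZZ) := inferInstance
  -- enumerate a countable topological basis of `ZZ × ZZ`
  obtain ⟨b, hb⟩ : ∃ b : ℕ → Set (ZZ × ZZ), countableBasis (ZZ × ZZ) = range b := by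
    apply (countable_countableBasis (ZZ × ZZ)).exists_eq_range
    obtain ⟨t, ht, -, -⟩ := (isBasis_countableBasis (ZZ × ZZ)).exists_subset_of_mem_open
      (mem_univ (default : ZZ × ZZ)) isOpen_univ
    exact ⟨t, ht⟩
  have hbopen : ∀ n, IsOpen (b n) :=
    fun n => isOpen_of_mem_countableBasis (hb ▸ mem_range_self n)
  have hbasis : ∀ (z : ZZ × ZZ) (U : Set (ZZ × ZZ)), IsOpen U → z ∈ U →
      ∃ n, z ∈ b n ∧ b n ⊆ U := by
    intro z U hU hz
    obtain ⟨t, ht, hzt, htU⟩ := (isBasis_countableBasis (ZZ × ZZ)).exists_subset_of_mem_open hz hU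
    obtain ⟨n, rfl⟩ := hb ▸ ht
    exact ⟨n, hzt, htU⟩
  -- the universal closed set
  set V : Set (ZZ × (ZZ × ZZ)) := {p | ∀ n, p.2 ∈ b n → p.1 n ≠ 0} with hV
  have hVclosed : IsClosed V := by
    have hVi : V = ⋂ n, {p : ZZ × (ZZ × ZZ) | p.2 ∈ b n → p.1 n ≠ 0} := by
      ext p; simp [hV]
    rw [hVi]
    refine isClosed_iInter fun n => ?_
    have he : {p : ZZ × (ZZ × ZZ) | p.2 ∈ b n → p.1 n ≠ 0} =
        ((fun p : ZZ × (ZZ × ZZ) => p.2) ⁻¹' (b n) ∩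
          (fun p : ZZ × (ZZ × ZZ) => p.1 n) ⁻¹' {0})ᶜ := by
      ext p; by_cases h : p.2 ∈ b n <;> simp [h]
    rw [he]
    apply IsOpen.isClosed_compl
    exact ((hbopen n).preimage continuous_snd).inter
      (isOpen_discrete _ |>.preimage ((continuous_apply n).comp continuous_fst))
  -- closed sets are recovered from their basis codes
  have hclosed_eq : ∀ F : Set (ZZ × ZZ), IsClosed F →
      F = {z | ∀ n, z ∈ b n → (b n ∩ F).Nonempty} := by
    intro F hF
    ext z
    constructor
    · intro hz n hn
      exact ⟨z, hn, hz⟩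
    · intro hz
      by_contra h
      obtain ⟨n, hzn, hsub⟩ := hbasis z Fᶜ hF.isOpen_compl h
      obtain ⟨w, hw1, hw2⟩ := hz n hzn
      exact hsub hw1 hw2
  -- universality: every analytic subset of ZZ is a section of the projection of V
  have huniv : ∀ A : Set ZZ, AnalyticSet A →
      ∃ y : ZZ, A = {x : ZZ | ∃ w : ZZ, (y, (x, w)) ∈ V} := by
    intro A hA
    rw [AnalyticSet] at hA
    rcases hA with rfl | ⟨f, hf, rfl⟩
    · refine ⟨fun _ => 0, ?_⟩
      symm
      rw [eq_empty_iff_forall_notMem]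
      rintro x ⟨w, hw⟩
      obtain ⟨n, hn, -⟩ := hbasis (x, w) univ isOpen_univ (mem_univ _)
      exact hw n hn rfl
    · set F : Set (ZZ × ZZ) := {z | z.1 = f z.2} with hFdef
      have hF : IsClosed F := isClosed_eq continuous_fst (hf.comp continuous_snd)
      classical
      refine ⟨fun n => if (b n ∩ F).Nonempty then 1 else 0, ?_⟩
      have key : ∀ z : ZZ × ZZ,
          (∀ n, z ∈ b n → (if (b n ∩ F).Nonempty then 1 else 0) ≠ 0) ↔ z ∈ F := by
        intro z
        have h1 : (∀ n, z ∈ b n → (if (b n ∩ F).Nonempty then 1 else 0) ≠ 0) ↔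
            (∀ n, z ∈ b n → (b n ∩ F).Nonempty) := by
          refine forall_congr' fun n => imp_congr_right fun _ => ?_
          by_cases hne : (b n ∩ F).Nonempty <;> simp [hne]
        rw [h1]
        conv_rhs => rw [hclosed_eq F hF]
        exact Iff.rfl
      ext x
      constructor
      · rintro ⟨w, rfl⟩
        exact ⟨w, (key (f w, w)).2 rfl⟩
      · rintro ⟨w, hw⟩
        exact ⟨w, ((key (x, w)).1 hw).symm ▸ rfl⟩
  -- the diagonal closed set
  refine ⟨{p : ZZ × ZZ | (p.1, (p.1, p.2)) ∈ V}, ?_, ?_⟩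
  · exact hVclosed.preimage ((continuous_fst).prodMk ((continuous_fst).prodMk continuous_snd))
  · intro hD
    set D : Set ZZ := {x : ZZ | ∃ w : ZZ, (x, (x, w)) ∈ V} with hDdef
    have hDm : MeasurableSet D := hD
    have hDc : AnalyticSet Dᶜ := hDm.compl.analyticSet
    obtain ⟨y, hy⟩ := huniv Dᶜ hDc
    have hiff : y ∈ Dᶜ ↔ y ∈ D := by
      rw [hy]; exact Iff.rfl
    by_cases h : y ∈ D
    · exact (hiff.2 h) h
    · exact h (hiff.1 h)

/-- There is a Borel subset of `ℝ × ℝ` whose projection is not Borel. -/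
private lemma exists_borel_nonmeasurable_proj :
    ∃ B : Set (ℝ × ℝ), MeasurableSet B ∧ ¬ MeasurableSet {r : ℝ | ∃ s : ℝ, (r, s) ∈ B} := by
  obtain ⟨C, hCclosed, hCproj⟩ := exists_closed_nonmeasurable_proj
  obtain ⟨e⟩ : Nonempty (ZZ ≃ᵐ ℝ) :=
    ⟨PolishSpace.measurableEquivOfNotCountable ZZ_not_countable
      (fun h => (not_countable (α := ℝ)) h)⟩
  set E2 : ZZ × ZZ ≃ᵐ ℝ × ℝ := e.prodCongr e with hE2
  refine ⟨E2 '' C, E2.measurableSet_image.2 hCclosed.measurableSet, ?_⟩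
  have hproj : {r : ℝ | ∃ s : ℝ, (r, s) ∈ E2 '' C} = e '' {x : ZZ | ∃ w : ZZ, (x, w) ∈ C} := by
    ext r
    constructor
    · rintro ⟨s, ⟨x, w⟩, hxw, hE⟩
      have h1 : e x = r := congrArg Prod.fst hE
      exact ⟨x, ⟨w, hxw⟩, h1⟩
    · rintro ⟨x, ⟨w, hxw⟩, rfl⟩
      exact ⟨e w, ⟨(x, w), hxw, rfl⟩⟩
  intro hmeas
  rw [hproj] at hmeas
  have := e.measurable hmeas
  rw [e.injective.preimage_image] at this
  exact hCproj this

open Classical in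
theorem exists_nonmeasurable_query :
    ∃ B : Set (ℝ × ℝ), MeasurableSet B ∧
      ¬ @Measurable _ _ (countingMS ℝ) (countingMS ℝ)
        (fun D : Multiset ℝ =>
          if ∃ x : ℝ, D = {x} ∧ ∃ y : ℝ, (x, y) ∈ B then D else 0) := by
  obtain ⟨B, hB, hP⟩ := exists_borel_nonmeasurable_proj
  refine ⟨B, hB, fun hQ => ?_⟩
  -- the singleton map is measurable
  have hs : @Measurable ℝ (Multiset ℝ) _ (countingMS ℝ) (fun x => ({x} : Multiset ℝ)) := by
    apply measurable_generateFrom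
    rintro t ⟨E, n, hE, rfl⟩
    have heq : (fun x : ℝ => ({x} : Multiset ℝ)) ⁻¹' {D | countIn D E = n} =
        (if n = 1 then E else if n = 0 then Eᶜ else ∅) := by
      ext x
      by_cases hx : x ∈ E <;> rcases n with (_ | _ | n) <;>
        simp [countIn, Multiset.filter_singleton, hx]
    rw [heq]
    split
    · exact hE
    · split
      · exact hE.compl
      · exact MeasurableSet.empty
  -- the generator "exactly one point"
  have hG : MeasurableSet[countingMS ℝ] {D : Multiset ℝ | countIn D (univ : Set ℝ) = 1} :=
    MeasurableSpace.measurableSet_generateFrom ⟨univ, 1, MeasurableSet.univ, rfl⟩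
  have hcomp := (hQ.comp hs) hG
  have heq2 : (fun x : ℝ =>
        (if ∃ x' : ℝ, ({x} : Multiset ℝ) = {x'} ∧ ∃ y : ℝ, (x', y) ∈ B then ({x} : Multiset ℝ)
          else 0)) ⁻¹' {D : Multiset ℝ | countIn D (univ : Set ℝ) = 1} =
      {r : ℝ | ∃ s : ℝ, (r, s) ∈ B} := by
    ext x
    by_cases hx : ∃ y : ℝ, (x, y) ∈ B
    · have hc : ∃ x' : ℝ, ({x} : Multiset ℝ) = {x'} ∧ ∃ y : ℝ, (x', y) ∈ B := ⟨x, rfl, hx⟩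
      simp only [mem_preimage, if_pos hc, mem_setOf_eq]
      simp [countIn, Multiset.filter_singleton, hx]
    · have hc : ¬ ∃ x' : ℝ, ({x} : Multiset ℝ) = {x'} ∧ ∃ y : ℝ, (x', y) ∈ B := by
        rintro ⟨x', hxx', hy⟩
        exact hx (Multiset.singleton_inj.1 hxx' ▸ hy)
      simp only [mem_preimage, if_neg hc, mem_setOf_eq]
      simp [countIn, hx]
  refine hP ?_
  rw [← heq2]
  exact hcomp
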